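/- The linearization of the universal construction is legal: each operation's response equals the result of applying the sequential specification to the state obtained by applying, in linearization order, all preceding regular operations. -/
import Mathlib


/-- Legality of the linearization of the universal construction: every
operation's response equals the result of applying the sequential
specification τ to the state obtained by applying, in linearization order,
all the regular operations preceding it. Consensus objects are indexed
1..m in the racing order; `s j` is the state decided at consensus j;
`reg j` is the unique regular operation of consensus j. -/
theorem stmt10 {S OpT V : Type} (τ : S → OpT → S × V) (s0 : S)
    {n : ℕ} (cons : Fin n → ℕ) (typ : Fin n → OpT) (res : Fin n → V)
    (regular : Fin n → Prop)
    (s : ℕ → S) (m : ℕ)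
    (hcons : ∀ i, 1 ≤ cons i ∧ cons i ≤ m)
    (hs0 : s 0 = s0)
    (reg : ℕ → Fin n)
    -- each used consensus has exactly one regular operation
    (hregOk : ∀ j, 1 ≤ j → j ≤ m → regular (reg j) ∧ cons (reg j) = j)
    (hregUniq : ∀ i, regular i → i = reg (cons i))
    -- a regular operation decides τ applied to the state of the previous consensus
    (hreg : ∀ i, regular i → (s (cons i), res i) = τ (s (cons i - 1)) (typ i))
    -- a trivial operation reads the decided state and leaves it unchanged
    (htriv : ∀ i, ¬ regular i → τ (s (cons i)) (typ i) = (s (cons i), res i)) :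
    ∀ applyAll : ℕ → S, applyAll 0 = s0 →
      -- applyAll j : the state resulting from applying, in linearization
      -- order, the regular operations of the first j consensus objects
      (∀ j, j < m → applyAll (j + 1) = (τ (applyAll j) (typ (reg (j + 1)))).1) →
      ∀ i : Fin n,
        -- a regular operation's response: τ applied to the state of all
        -- regular operations preceding it in the linearization
        (regular i → res i = (τ (applyAll (cons i - 1)) (typ i)).2) ∧
        -- a trivial operation's response: τ applied to the state including
        -- the regular operation of its own consensus
        (¬ regular i → res i = (τ (applyAll (cons i)) (typ i)).2) := by
  intro applyAll h0 hstep i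
  have key : ∀ j, j ≤ m → applyAll j = s j := by
    intro j
    induction j with
    | zero => intro _; rw [h0, hs0]
    | succ k ih =>
      intro hk
      have hkm : k < m := Nat.lt_of_succ_le hk
      obtain ⟨hregr, hconsr⟩ := hregOk (k + 1) (Nat.succ_le_succ (Nat.zero_le k)) hk
      have hr := hreg (reg (k + 1)) hregr
      rw [hconsr] at hr
      simp only [Nat.add_sub_cancel] at hr
      rw [hstep k hkm, ih (Nat.le_of_lt hkm), ← hr]
  constructor
  · intro hregi
    have hr := hreg i hregi
    rw [key (cons i - 1) (Nat.le_trans (Nat.sub_le _ _) (hcons i).2), ← hr]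
  · intro htrivi
    have ht := htriv i htrivi
    rw [key (cons i) (hcons i).2, ht]
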